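/- Let p ≥ 3 and let Z = (Z_1, …, Z_p) be a standard Gaussian vector in ℝ^p. Then for all i ≠ j, E[Z_i Z_j · 1{Z_1 Z_2 ⋯ Z_p > 0}] = 0 and E[Z_i Z_j · 1{Z_1 Z_2 ⋯ Z_p < 0}] = 0; consequently E[Z_i Z_j | σ(sign(Z_1 ⋯ Z_p))] = 0 almost surely. -/

import Mathlib

open MeasureTheory ProbabilityTheory

lemma integrable_id_gaussian : Integrable (fun x : ℝ => x) (gaussianReal 0 1) := by
  rw [gaussianReal_of_var_ne_zero 0 one_ne_zero,
    integrable_withDensity_iff (measurable_gaussianPDF 0 1)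
      (ae_of_all _ fun x => ENNReal.ofReal_lt_top)]
  have h : Integrable (fun x : ℝ => (Real.sqrt (2 * Real.pi))⁻¹ *
      (x * Real.exp (-(1/2) * x ^ 2))) volume :=
    (integrable_mul_exp_neg_mul_sq (by norm_num : (0:ℝ) < 1/2)).const_mul _
  refine h.congr (ae_of_all _ fun x => ?_)
  simp only [gaussianPDF, ENNReal.toReal_ofReal (gaussianPDFReal_nonneg 0 1 x), gaussianPDFReal,
    NNReal.coe_one, mul_one, sub_zero]
  rw [ENNReal.toReal_ofReal (by positivity), show -x ^ 2 / 2 = -(1/2) * x ^ 2 by ring]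
  ring

lemma measurable_real_sign : Measurable Real.sign := by
  have : Real.sign = fun r : ℝ => if r < 0 then (-1:ℝ) else if 0 < r then 1 else 0 :=
    funext fun r => rfl
  rw [this]
  exact Measurable.ite (measurableSet_lt measurable_id measurable_const) measurable_const
    (Measurable.ite (measurableSet_lt measurable_const measurable_id) measurable_const
      measurable_const)

lemma integrable_prod_gaussian {n : ℕ} (f : Fin n → ℝ → ℝ)
    (hf : ∀ k, Integrable (f k) (gaussianReal 0 1)) :
    Integrable (fun x : Fin n → ℝ => ∏ k, f k (x k))
      (Measure.pi fun _ : Fin n => gaussianReal 0 1) := by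
  letI : MeasureSpace ℝ := ⟨gaussianReal 0 1⟩
  haveI : SigmaFinite (volume : Measure ℝ) := by
    show SigmaFinite (gaussianReal 0 1); infer_instance
  have h : Integrable (fun x : Fin n → ℝ => ∏ k, f k (x k)) volume :=
    Integrable.fin_nat_prod (𝕜 := ℝ) hf
  rwa [volume_pi] at h

lemma gaussian_map_neg : Measure.map (fun t : ℝ => -t) (gaussianReal 0 1) = gaussianReal 0 1 := by
  have h := gaussianReal_map_const_mul (μ := 0) (v := 1) (-1)
  have h2 : (fun t : ℝ => -1 * t) = fun t : ℝ => -t := funext fun t => by ring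
  rw [h2] at h
  rw [h]
  congr 1
  · ring
  · ext
    norm_num

noncomputable def flipEquiv {p : ℕ} (l : Fin p) : (Fin p → ℝ) ≃ᵐ (Fin p → ℝ) :=
  MeasurableEquiv.piCongrRight (fun k => if k = l then MeasurableEquiv.neg ℝ else
    MeasurableEquiv.refl ℝ)

lemma flipEquiv_apply {p : ℕ} (l : Fin p) (x : Fin p → ℝ) (k : Fin p) :
    flipEquiv l x k = if k = l then -(x k) else x k := by
  by_cases hk : k = l <;>
    simp [flipEquiv, MeasurableEquiv.piCongrRight, Equiv.piCongrRight, hk]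

lemma flipEquiv_measurePreserving {p : ℕ} (l : Fin p) :
    MeasurePreserving (flipEquiv l) (Measure.pi fun _ : Fin p => gaussianReal 0 1)
      (Measure.pi fun _ : Fin p => gaussianReal 0 1) := by
  have h := measurePreserving_pi (fun _ : Fin p => gaussianReal 0 1)
    (fun _ : Fin p => gaussianReal 0 1)
    (f := fun k : Fin p => fun t : ℝ => if k = l then -t else t) (fun k => ?_)
  · have : (fun (a : Fin p → ℝ) (k : Fin p) => if k = l then -(a k) else a k) = ⇑(flipEquiv l) := by
      funext a k
      rw [flipEquiv_apply]
    rwa [this] at h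
  · by_cases hk : k = l
    · simp only [hk, if_true]
      exact ⟨measurable_neg, gaussian_map_neg⟩
    · simp only [hk, if_false]
      exact MeasurePreserving.id _

lemma flipEquiv_prod {p : ℕ} (l : Fin p) (x : Fin p → ℝ) :
    ∏ k, flipEquiv l x k = -∏ k, x k :=
  calc ∏ k, flipEquiv l x k = ∏ k, Function.update x l (-(x l)) k :=
        Finset.prod_congr rfl fun k _ => by
          rw [flipEquiv_apply, Function.update_apply]
          split_ifs with h
          · rw [h]
          · rfl
    _ = (-(x l)) * ∏ k ∈ Finset.univ \ {l}, x k :=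
        Finset.prod_update_of_mem (Finset.mem_univ l) x _
    _ = -((x l) * ∏ k ∈ Finset.univ \ {l}, x k) := by ring
    _ = -∏ k, x k := by rw [Finset.sdiff_singleton_eq_erase, Finset.mul_prod_erase _ _ (Finset.mem_univ l)]

lemma gaussian_pi_offdiag {p : ℕ} (hp : 3 ≤ p) {i j : Fin p} (hij : i ≠ j) :
    (∫ x in {x : Fin p → ℝ | 0 < ∏ k, x k}, x i * x j
        ∂(Measure.pi fun _ : Fin p => gaussianReal 0 1)) = 0 ∧
    (∫ x in {x : Fin p → ℝ | ∏ k, x k < 0}, x i * x j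
        ∂(Measure.pi fun _ : Fin p => gaussianReal 0 1)) = 0 := by
  set μ := Measure.pi fun _ : Fin p => gaussianReal 0 1 with hμ
  have hpre : ∀ l : Fin p, (flipEquiv l) ⁻¹' {x | 0 < ∏ k, x k} = {x | ∏ k, x k < 0} := by
    intro l; ext x
    simp only [Set.mem_preimage, Set.mem_setOf_eq, flipEquiv_prod]
    exact neg_pos
  have flip : ∀ l : Fin p,
      (∫ x in {x : Fin p → ℝ | 0 < ∏ k, x k}, x i * x j ∂μ)
        = ∫ x in {x : Fin p → ℝ | ∏ k, x k < 0},
            (flipEquiv l x) i * (flipEquiv l x) j ∂μ := by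
    intro l
    have h := setIntegral_map_equiv (μ := μ) (flipEquiv l) (fun y => y i * y j)
      {x | 0 < ∏ k, x k}
    rwa [(flipEquiv_measurePreserving l).map_eq, hpre l] at h
  obtain ⟨k0, hk0i, hk0j⟩ : ∃ k0 : Fin p, k0 ≠ i ∧ k0 ≠ j := by
    by_contra h
    push_neg at h
    have hsub : (Finset.univ : Finset (Fin p)) ⊆ {i, j} := by
      intro k _
      by_cases hk : k = i
      · simp [hk]
      · simp [h k hk]
    have hcard := Finset.card_le_card hsub
    rw [Finset.card_univ, Fintype.card_fin] at hcard
    have : ({i, j} : Finset (Fin p)).card ≤ 2 :=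
      le_trans (Finset.card_insert_le _ _) (by simp)
    omega
  have h1 := flip k0
  have e1 : ∀ x : Fin p → ℝ, (flipEquiv k0 x) i * (flipEquiv k0 x) j = x i * x j := by
    intro x
    rw [flipEquiv_apply, flipEquiv_apply, if_neg (Ne.symm hk0i), if_neg (Ne.symm hk0j)]
  simp only [e1] at h1
  have h2 := flip i
  have e2 : ∀ x : Fin p → ℝ, (flipEquiv i x) i * (flipEquiv i x) j = -(x i * x j) := by
    intro x
    rw [flipEquiv_apply, flipEquiv_apply, if_pos rfl, if_neg (Ne.symm hij)]
    ring
  simp only [e2] at h2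
  rw [integral_neg] at h2
  constructor <;> linarith

/-- For the `p`-sparse parity with `p ≥ 3`: for `i ≠ j` the correlations
`E[Z_i Z_j · 1{∏ Z_k > 0}]` and `E[Z_i Z_j · 1{∏ Z_k < 0}]` vanish, and hence
`E[Z_i Z_j | σ(sign(∏ Z_k))] = 0` almost surely. -/
theorem parity_offdiagonal_vanishes {Ω : Type*} [MeasurableSpace Ω]
    (P : Measure Ω) [IsProbabilityMeasure P] {p : ℕ} (hp : 3 ≤ p)
    (Z : Ω → Fin p → ℝ) (hZmeas : Measurable Z)
    (hZ : Measure.map Z P = Measure.pi fun _ : Fin p => gaussianReal 0 1) :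
    (∀ i j : Fin p, i ≠ j →
      (∫ ω in {ω | 0 < ∏ k, Z ω k}, Z ω i * Z ω j ∂P) = 0 ∧
      (∫ ω in {ω | ∏ k, Z ω k < 0}, Z ω i * Z ω j ∂P) = 0) ∧
    (∀ i j : Fin p, i ≠ j →
      P[(fun ω => Z ω i * Z ω j) |
          MeasurableSpace.comap (fun ω => Real.sign (∏ k, Z ω k)) inferInstance]
        =ᵐ[P] 0) := by
  have hprodZ : Measurable fun ω => ∏ k, Z ω k :=
    Finset.measurable_prod _ fun k _ => (measurable_pi_apply k).comp hZmeas
  have hA : MeasurableSet {ω | 0 < ∏ k, Z ω k} := measurableSet_lt measurable_const hprodZ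
  have hB : MeasurableSet {ω | ∏ k, Z ω k < 0} := measurableSet_lt hprodZ measurable_const
  have hprodx : Measurable fun x : Fin p → ℝ => ∏ k, x k :=
    Finset.measurable_prod _ fun k _ => measurable_pi_apply k
  have hSA : MeasurableSet {x : Fin p → ℝ | 0 < ∏ k, x k} :=
    measurableSet_lt measurable_const hprodx
  have hSB : MeasurableSet {x : Fin p → ℝ | ∏ k, x k < 0} :=
    measurableSet_lt hprodx measurable_const
  have hasm : ∀ i j : Fin p, AEStronglyMeasurable (fun x : Fin p → ℝ => x i * x j)
      (Measure.map Z P) := fun i j => by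
    rw [hZ]
    exact ((measurable_pi_apply i).mul (measurable_pi_apply j)).aestronglyMeasurable
  have htrans : ∀ (s : Set (Fin p → ℝ)), MeasurableSet s → ∀ i j : Fin p,
      (∫ ω in Z ⁻¹' s, Z ω i * Z ω j ∂P)
        = ∫ x in s, x i * x j ∂(Measure.pi fun _ : Fin p => gaussianReal 0 1) := by
    intro s hs i j
    have h := setIntegral_map hs (hasm i j) hZmeas.aemeasurable
    rw [hZ] at h
    exact h.symm
  have main1 : ∀ i j : Fin p, i ≠ j →
      (∫ ω in {ω | 0 < ∏ k, Z ω k}, Z ω i * Z ω j ∂P) = 0 ∧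
      (∫ ω in {ω | ∏ k, Z ω k < 0}, Z ω i * Z ω j ∂P) = 0 := by
    intro i j hij
    have hg := gaussian_pi_offdiag hp hij
    constructor
    · rw [show {ω | 0 < ∏ k, Z ω k} = Z ⁻¹' {x | 0 < ∏ k, x k} from rfl,
        htrans _ hSA i j, hg.1]
    · rw [show {ω | ∏ k, Z ω k < 0} = Z ⁻¹' {x | ∏ k, x k < 0} from rfl,
        htrans _ hSB i j, hg.2]
  refine ⟨main1, ?_⟩
  intro i j hij
  -- integrability
  have hfμ : Integrable (fun x : Fin p → ℝ => x i * x j)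
      (Measure.pi fun _ : Fin p => gaussianReal 0 1) := by
    have h := integrable_prod_gaussian (n := p)
      (fun k t => if k = i ∨ k = j then t else 1) (fun k => by
        by_cases hk : k = i ∨ k = j
        · simp only [if_pos hk]
          exact integrable_id_gaussian
        · simp only [if_neg hk]
          exact integrable_const 1)
    refine h.congr (ae_of_all _ fun x => ?_)
    show (∏ k, if k = i ∨ k = j then x k else 1) = x i * x j
    rw [show (fun k => if k = i ∨ k = j then x k else 1)
        = fun k => if k ∈ ({i, j} : Finset (Fin p)) then x k else 1 from
      funext fun k => by simp [Finset.mem_insert, Finset.mem_singleton]]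
    rw [Finset.prod_ite_mem, Finset.univ_inter, Finset.prod_pair hij]
  have hfP : Integrable (fun ω => Z ω i * Z ω j) P := by
    have h := (integrable_map_measure (hasm i j) hZmeas.aemeasurable).mp (by
      rw [hZ]; exact hfμ)
    exact h
  -- the null set where the product vanishes
  have hSC : MeasurableSet {x : Fin p → ℝ | ∏ k, x k = 0} :=
    measurableSet_eq_fun hprodx measurable_const
  have hC : P {ω | ∏ k, Z ω k = 0} = 0 := by
    have h0 : gaussianReal 0 1 ({0} : Set ℝ) = 0 :=
      gaussianReal_absolutelyContinuous 0 one_ne_zero (by simp)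
    have hμ0 : (Measure.pi fun _ : Fin p => gaussianReal 0 1)
        {x : Fin p → ℝ | ∏ k, x k = 0} = 0 := by
      refine measure_mono_null (fun x hx => ?_)
        (measure_iUnion_null (s := fun k : Fin p => Function.eval k ⁻¹' ({0} : Set ℝ))
          fun k : Fin p => Measure.pi_eval_preimage_null (fun _ : Fin p => gaussianReal 0 1) h0)
      obtain ⟨k, -, hk⟩ := Finset.prod_eq_zero_iff.mp hx
      exact Set.mem_iUnion.mpr ⟨k, hk⟩
    have : P {ω | ∏ k, Z ω k = 0} = Measure.map Z P {x : Fin p → ℝ | ∏ k, x k = 0} := by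
      rw [Measure.map_apply hZmeas hSC]
      rfl
    rw [this, hZ]
    exact hμ0
  -- conditional expectation
  have hgmeas : Measurable fun ω => Real.sign (∏ k, Z ω k) :=
    measurable_real_sign.comp hprodZ
  have hle := hgmeas.comap_le
  haveI : SigmaFinite (P.trim hle) := by infer_instance
  refine (ae_eq_condExp_of_forall_setIntegral_eq hle hfP
    (fun s _ _ => integrableOn_zero) (fun s hs _ => ?_)
    (StronglyMeasurable.aestronglyMeasurable stronglyMeasurable_zero)).symm
  simp only [Pi.zero_apply, integral_zero]
  obtain ⟨t, ht, rfl⟩ := hs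
  set G := fun ω => Real.sign (∏ k, Z ω k) with hG
  have hAint := (main1 i j hij).1
  have hBint := (main1 i j hij).2
  have d1 := integral_inter_add_diff (μ := P) (s := G ⁻¹' t)
    (f := fun ω => Z ω i * Z ω j) hA hfP.integrableOn
  have d2 := integral_inter_add_diff (μ := P) (s := G ⁻¹' t \ {ω | 0 < ∏ k, Z ω k})
    (f := fun ω => Z ω i * Z ω j) hB hfP.integrableOn
  have pA : (∫ ω in G ⁻¹' t ∩ {ω | 0 < ∏ k, Z ω k}, Z ω i * Z ω j ∂P) = 0 := by
    by_cases h1 : (1 : ℝ) ∈ t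
    · rw [Set.inter_eq_right.mpr fun ω hω => by
        simp only [Set.mem_preimage, hG]
        rw [Real.sign_of_pos hω]
        exact h1]
      exact hAint
    · rw [show G ⁻¹' t ∩ {ω | 0 < ∏ k, Z ω k} = ∅ from Set.eq_empty_of_forall_notMem
        fun ω hω => h1 (by rw [← Real.sign_of_pos hω.2]; exact hω.1)]
      exact setIntegral_empty
  have pB : (∫ ω in (G ⁻¹' t \ {ω | 0 < ∏ k, Z ω k}) ∩ {ω | ∏ k, Z ω k < 0},
      Z ω i * Z ω j ∂P) = 0 := by
    by_cases h1 : (-1 : ℝ) ∈ t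
    · have hsub : {ω | ∏ k, Z ω k < 0} ⊆ G ⁻¹' t \ {ω | 0 < ∏ k, Z ω k} := by
        intro ω hω
        refine ⟨?_, ?_⟩
        · simp only [Set.mem_preimage, hG]
          rw [Real.sign_of_neg hω]
          exact h1
        · simp only [Set.mem_setOf_eq, not_lt]
          exact le_of_lt hω
      rw [Set.inter_eq_right.mpr hsub]
      exact hBint
    · rw [show (G ⁻¹' t \ {ω | 0 < ∏ k, Z ω k}) ∩ {ω | ∏ k, Z ω k < 0} = ∅ from
        Set.eq_empty_of_forall_notMem
          fun ω hω => h1 (by rw [← Real.sign_of_neg hω.2]; exact hω.1.1)]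
      exact setIntegral_empty
  have pC : (∫ ω in (G ⁻¹' t \ {ω | 0 < ∏ k, Z ω k}) \ {ω | ∏ k, Z ω k < 0},
      Z ω i * Z ω j ∂P) = 0 := by
    refine setIntegral_measure_zero _ (measure_mono_null (fun ω hω => ?_) hC)
    obtain ⟨⟨-, hnA⟩, hnB⟩ := hω
    simp only [Set.mem_setOf_eq] at hnA hnB ⊢
    rcases lt_trichotomy (∏ k, Z ω k) 0 with h | h | h
    · exact absurd h hnB
    · exact h
    · exact absurd h hnA
  rw [← d1, ← d2, pA, pB, pC]
  ring
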